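/- Let A be a proper connective dg algebra and d ≥ 1 with A ∈ H^d := D^fd(A)^{≤0} ∩ D^fd(A)^{>-d}. Then H^d has enough injectives as an extriangulated category, and the injective objects are exactly add(D(A)[d-1]). -/

import Mathlib

open CategoryTheory Category Limits Pretriangulated Triangulated ZeroObject

universe w v u

namespace Paper

section Defs

variable {C : Type u} [Category.{v} C] [Preadditive C] [HasZeroObject C]
  [HasShift C ℤ] [∀ n : ℤ, (shiftFunctor C n).Additive] [Pretriangulated C]
  [HasFiniteBiproducts C] [HasBinaryBiproducts C]

/-- `X` lies in `add A`: it is a direct summand of a finite direct sum of copies of `A`. -/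
def inAdd (A X : C) : Prop :=
  ∃ (n : ℕ) (s : X ⟶ ⨁ fun _ : Fin n => A) (p : (⨁ fun _ : Fin n => A) ⟶ X), s ≫ p = 𝟙 X

/-- The star operation `S ∗ T` on classes of objects of a (pre)triangulated category:
objects `E` admitting a distinguished triangle `X ⟶ E ⟶ Y ⟶ X⟦1⟧` with `X ∈ S`, `Y ∈ T`. -/
def star (S T : Set C) : Set C :=
  {E | ∃ (X : C) (_ : X ∈ S) (Y : C) (_ : Y ∈ T) (f : X ⟶ E) (g : E ⟶ Y)
    (h : Y ⟶ X⟦(1 : ℤ)⟧), Triangle.mk f g h ∈ distTriang C}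

/-- `add (A⟦i⟧)` as a class of objects. -/
def addShift (A : C) (i : ℤ) : Set C := {X | inAdd (A⟦i⟧) X}

/-- `per(A)^{[-n,0]} = add(A) ∗ add(A)[1] ∗ ⋯ ∗ add(A)[n]`. -/
def perInterval (A : C) : ℕ → Set C
  | 0 => addShift A 0
  | n + 1 => star (perInterval A n) (addShift A (n + 1))

/-- `thick(DA)^{[0,n]} = add(DA)[-n] ∗ ⋯ ∗ add(DA)[-1] ∗ add(DA)`. -/
def coInterval (DA : C) : ℕ → Set C
  | 0 => addShift DA 0
  | n + 1 => star (addShift DA (-(n + 1 : ℕ))) (coInterval DA n)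

/-- The extended heart `H^d = T^{≤ 0} ∩ T^{> -d}`. -/
def Hd (t : TStructure C) (d : ℕ) : Set C := {X | t.le 0 X ∧ t.ge (1 - (d : ℤ)) X}

/-- Projectivity in the extriangulated category given by an extension-closed class `S`:
`E(P, X) = Hom(P, X⟦1⟧)` vanishes for all `X ∈ S`. -/
def projOn (S : Set C) (P : C) : Prop := ∀ X ∈ S, ∀ f : P ⟶ X⟦(1 : ℤ)⟧, f = 0

/-- Injectivity in the extriangulated category given by an extension-closed class `S`. -/
def injOn (S : Set C) (I : C) : Prop := ∀ X ∈ S, ∀ f : X ⟶ I⟦(1 : ℤ)⟧, f = 0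

/-- `p : M ⟶ N` is a deflation for the extriangulated structure on the extension-closed
class `S`: it is the second map of a distinguished triangle with all terms in `S`. -/
def isDeflation (S : Set C) {M N : C} (p : M ⟶ N) : Prop :=
  ∃ (L : C) (_ : L ∈ S) (f : L ⟶ M) (h : N ⟶ L⟦(1 : ℤ)⟧),
    Triangle.mk f p h ∈ distTriang C

/-- `i : L ⟶ M` is an inflation for the extriangulated structure on `S`. -/
def isInflation (S : Set C) {L M : C} (i : L ⟶ M) : Prop :=
  ∃ (N : C) (_ : N ∈ S) (p : M ⟶ N) (h : N ⟶ L⟦(1 : ℤ)⟧),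
    Triangle.mk i p h ∈ distTriang C

/-- `f` factors through an object of `add W`. -/
def factorsThruAdd (W : C) {X Y : C} (f : X ⟶ Y) : Prop :=
  ∃ (Q : C) (_ : inAdd W Q) (a : X ⟶ Q) (b : Q ⟶ Y), f = a ≫ b

/-- An indecomposable object: nonzero, and in any direct sum decomposition one summand
vanishes. -/
def Indec (X : C) : Prop :=
  ¬ IsZero X ∧ ∀ Y Z : C, Nonempty (X ≅ Y ⊞ Z) → IsZero Y ∨ IsZero Z

/-- Data of the truncation functor `t^{≥ n}`, left adjoint to the inclusion of `T^{≥ n}`,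
together with its unit and the truncation triangles. -/
structure TruncGEData (t : TStructure C) (n : ℤ) where
  F : C ⥤ C
  η : 𝟭 C ⟶ F
  ge : ∀ X : C, t.ge n (F.obj X)
  tri : ∀ X : C, ∃ (Z : C) (_ : t.le (n - 1) Z) (f : Z ⟶ X) (h : F.obj X ⟶ Z⟦(1 : ℤ)⟧),
    Triangle.mk f (η.app X) h ∈ distTriang C
  adj : ∀ (X W : C), t.ge n W → Function.Bijective (fun g : F.obj X ⟶ W => η.app X ≫ g)

/-- Data of the truncation functor `t^{≤ n}`, right adjoint to the inclusion of `T^{≤ n}`,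
together with its counit and the truncation triangles. -/
structure TruncLEData (t : TStructure C) (n : ℤ) where
  F : C ⥤ C
  ε : F ⟶ 𝟭 C
  le : ∀ X : C, t.le n (F.obj X)
  tri : ∀ X : C, ∃ (Z : C) (_ : t.ge (n + 1) Z) (g : X ⟶ Z) (h : Z ⟶ (F.obj X)⟦(1 : ℤ)⟧),
    Triangle.mk (ε.app X) g h ∈ distTriang C
  adj : ∀ (W X : C), t.le n W → Function.Bijective (fun g : W ⟶ F.obj X => g ≫ ε.app X)

/-- Membership in the thick subcategory generated by `A`. -/
inductive thickMem (A : C) : C → Prop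
  | base : thickMem A A
  | zero : thickMem A 0
  | iso {X Y : C} : (X ≅ Y) → thickMem A X → thickMem A Y
  | shift (X : C) (n : ℤ) : thickMem A X → thickMem A (X⟦n⟧)
  | ext₂ {X Y Z : C} {f : X ⟶ Y} {g : Y ⟶ Z} {h : Z ⟶ X⟦(1 : ℤ)⟧} :
      (Triangle.mk f g h ∈ distTriang C) → thickMem A X → thickMem A Z → thickMem A Y
  | smd {X Y : C} (s : X ⟶ Y) (p : Y ⟶ X) : s ≫ p = 𝟙 X → thickMem A Y → thickMem A X

end Defs

/-- Abstraction of the derived category `D^fd(A)` of a proper connective dg algebra `A`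
over a field `k`, with its standard t-structure: `A` is connective (cohomology in
non-positive degrees), Hom-spaces are finite dimensional (properness), the standard
t-structure is bounded on `D^fd`, `A` is derived projective and `A` generates. -/
structure DGSetup (k : Type w) [Field k] (C : Type u) [Category.{v} C] [Preadditive C]
    [HasZeroObject C] [HasShift C ℤ] [∀ n : ℤ, (shiftFunctor C n).Additive]
    [Pretriangulated C] [Linear k C] where
  t : TStructure C
  A : C
  connective : t.le 0 A
  homFinite : ∀ X Y : C, FiniteDimensional k (X ⟶ Y)
  bounded : ∀ X : C, ∃ a b : ℤ, t.ge a X ∧ t.le b X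
  A_derived_projective : ∀ X : C, t.le 0 X → ∀ f : A ⟶ X⟦(1 : ℤ)⟧, f = 0
  generates : ∀ X : C, (∀ (n : ℤ) (f : A⟦n⟧ ⟶ X), f = 0) → IsZero X

section DG

variable {k : Type w} [Field k] {C : Type u} [Category.{v} C] [Preadditive C]
  [HasZeroObject C] [HasShift C ℤ] [∀ n : ℤ, (shiftFunctor C n).Additive]
  [Pretriangulated C] [Linear k C]

/-- A derived injective object of `D^fd(A)^{≥ 0}`. -/
def DerivedInjective (S : DGSetup k C) (I : C) : Prop :=
  S.t.ge 0 I ∧ ∀ X : C, S.t.ge 0 X → ∀ f : X ⟶ I⟦(1 : ℤ)⟧, f = 0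

variable [HasFiniteBiproducts C] [HasBinaryBiproducts C]

/-- The `k`-submodule of morphisms `X ⟶ Y` factoring through `add W`. -/
def addIdeal (k : Type w) [Field k] [Linear k C] (W : C) (X Y : C) : Submodule k (X ⟶ Y) :=
  Submodule.span k {f | factorsThruAdd W f}

end DG

variable {C : Type u} [Category.{v} C] [Preadditive C] [HasZeroObject C]
  [HasShift C ℤ] [∀ n : ℤ, (shiftFunctor C n).Additive] [Pretriangulated C]
  [HasFiniteBiproducts C] [HasBinaryBiproducts C]
  {k : Type w} [Field k] [Linear k C]


section Aux
set_option linter.unusedSectionVars false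

variable (t : TStructure C)

lemma shift_cancel {P Q : C} (a : ℤ) (f : P ⟶ Q)
    (h : (shiftFunctor C a).map f = 0) : f = 0 :=
  (shiftFunctor C a).map_injective (by rw [h, Functor.map_zero])

lemma le_shift' {X : C} {n : ℤ} (a : ℤ) (h : t.le n X) : t.le (n - a) (X⟦a⟧) :=
  t.le_shift n a (n - a) (by ring) X h

lemma ge_shift' {X : C} {n : ℤ} (a : ℤ) (h : t.ge n X) : t.ge (n - a) (X⟦a⟧) :=
  t.ge_shift n a (n - a) (by ring) X h

lemma le_mono {X : C} {n n' : ℤ} (hn : n ≤ n') (h : t.le n X) : t.le n' X :=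
  t.le_monotone hn X h

lemma ge_anti {X : C} {n n' : ℤ} (hn : n' ≤ n) (h : t.ge n X) : t.ge n' X :=
  t.ge_antitone hn X h

lemma zero_of_lt {X Y : C} {a b : ℤ} (ha : t.le a X) (hb : t.ge b Y) (hab : a < b)
    (f : X ⟶ Y) : f = 0 := by
  refine shift_cancel a f (t.zero' ((shiftFunctor C a).map f) ?_ ?_)
  · simpa using le_shift' t a ha
  · exact ge_anti t (by omega) (ge_shift' t a hb)

lemma LE_of_orth {X : C} (n : ℤ)
    (h : ∀ M : C, t.ge (n + 1) M → ∀ f : X ⟶ M, f = 0) : t.le n X := by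
  obtain ⟨Z, W, hZ, hW, f, g, hh, hT⟩ := t.exists_triangle X n (n + 1) rfl
  have hg : g = 0 := h W hW g
  obtain ⟨ψ, hψ⟩ := Triangle.yoneda_exact₃ _ hT (𝟙 W) (by rw [hg]; exact zero_comp)
  have hψ0 : ψ = 0 :=
    zero_of_lt t (by simpa using le_shift' t 1 hZ) hW (by omega) ψ
  have hWzero : IsZero W := by
    rw [IsZero.iff_id_eq_zero, hψ, hψ0, comp_zero]; rfl
  have : IsIso ((Triangle.mk f g hh).mor₁) :=
    (Triangle.isZero₃_iff_isIso₁ _ hT).1 hWzero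
  exact ObjectProperty.prop_of_iso (t.le n) (@asIso _ _ _ _ ((Triangle.mk f g hh).mor₁) this) hZ

lemma GE_of_orth {X : C} (n : ℤ)
    (h : ∀ M : C, t.le (n - 1) M → ∀ f : M ⟶ X, f = 0) : t.ge n X := by
  obtain ⟨Z, W, hZ, hW, f, g, hh, hT⟩ := t.exists_triangle X (n - 1) n (by ring)
  have hf : f = 0 := h Z hZ f
  obtain ⟨ψ, hψ⟩ := Triangle.coyoneda_exact₂ _ (inv_rot_of_distTriang _ hT) (𝟙 Z)
    (by change 𝟙 Z ≫ f = 0; rw [hf]; exact comp_zero)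
  have hψ0 : ψ = 0 :=
    zero_of_lt t hZ (by simpa using ge_shift' t (-1) hW) (by omega) ψ
  have hZzero : IsZero Z := by
    rw [IsZero.iff_id_eq_zero, hψ, hψ0, zero_comp]; rfl
  have : IsIso ((Triangle.mk f g hh).mor₂) :=
    (Triangle.isZero₁_iff_isIso₂ _ hT).1 hZzero
  exact ObjectProperty.prop_of_iso (t.ge n) (asIso ((Triangle.mk f g hh).mor₂)).symm hW

lemma LE_of_retract {X Y : C} (n : ℤ) (s : X ⟶ Y) (p : Y ⟶ X) (hsp : s ≫ p = 𝟙 X)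
    (hY : t.le n Y) : t.le n X := by
  refine LE_of_orth t n (fun M hM f => ?_)
  have : p ≫ f = 0 := zero_of_lt t hY hM (by omega) _
  rw [← id_comp f, ← hsp, assoc, this, comp_zero]

lemma GE_of_retract {X Y : C} (n : ℤ) (s : X ⟶ Y) (p : Y ⟶ X) (hsp : s ≫ p = 𝟙 X)
    (hY : t.ge n Y) : t.ge n X := by
  refine GE_of_orth t n (fun M hM f => ?_)
  have : f ≫ s = 0 := zero_of_lt t hM hY (by omega) _
  rw [← comp_id f, ← hsp, ← assoc, this, zero_comp]

lemma LE_biproduct {m : ℕ} (F : Fin m → C) (n : ℤ) (hF : ∀ j, t.le n (F j)) :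
    t.le n (⨁ F) := by
  refine LE_of_orth t n (fun M hM f => ?_)
  refine biproduct.hom_ext' _ _ (fun j => ?_)
  rw [comp_zero]
  exact zero_of_lt t (hF j) hM (by omega) _

lemma GE_biproduct {m : ℕ} (F : Fin m → C) (n : ℤ) (hF : ∀ j, t.ge n (F j)) :
    t.ge n (⨁ F) := by
  refine GE_of_orth t n (fun M hM f => ?_)
  refine biproduct.hom_ext _ _ (fun j => ?_)
  rw [zero_comp]
  exact zero_of_lt t hM (hF j) (by omega) _

end Aux


section SerreAux
set_option linter.unusedSectionVars false

variable (S : DGSetup k C) (DA : C)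
  (serre : ∀ M : C, (S.A ⟶ M) ≃ₗ[k] Module.Dual k (M ⟶ DA))
  (serre_nat : ∀ {M N : C} (g : M ⟶ N) (u : S.A ⟶ M) (w : N ⟶ DA),
      serre M u (g ≫ w) = serre N (u ≫ g) w)

include serre_nat in
lemma pairing {M : C} (u : S.A ⟶ M) (w : M ⟶ DA) :
    serre M u w = serre DA (u ≫ w) (𝟙 DA) := by
  have := serre_nat w u (𝟙 DA)
  rwa [comp_id] at this

include serre in
lemma homDA_zero {M : C} (hM : ∀ u : S.A ⟶ M, u = 0) (w : M ⟶ DA) : w = 0 := by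
  haveI := S.homFinite M DA
  refine (Module.forall_dual_apply_eq_zero_iff k w).mp (fun φ => ?_)
  obtain ⟨u, rfl⟩ := (serre M).surjective φ
  rw [hM u, map_zero]
  rfl

include serre in
lemma homA_zero {M : C} (hM : ∀ w : M ⟶ DA, w = 0) (u : S.A ⟶ M) : u = 0 := by
  refine (serre M).injective ?_
  rw [map_zero]
  exact LinearMap.ext (fun w => by rw [hM w, (serre M u).map_zero]; rfl)

/-- `Hom(A, M) = 0` whenever `M ∈ T^{≤ -1}` (derived projectivity of `A`). -/
lemma projA {M : C} (hM : S.t.le (-1) M) (f : S.A ⟶ M) : f = 0 := by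
  have e : (M⟦(-1 : ℤ)⟧)⟦(1 : ℤ)⟧ ≅ M :=
    (shiftFunctorCompIsoId C (-1 : ℤ) (1 : ℤ) (by ring)).app M
  have h0 : f ≫ e.inv = 0 := by
    refine S.A_derived_projective (M⟦(-1 : ℤ)⟧) ?_ (f ≫ e.inv)
    simpa using le_shift' S.t (-1) hM
  calc f = (f ≫ e.inv) ≫ e.hom := by simp
  _ = 0 := by rw [h0, zero_comp]

/-- `Hom(A⟦n⟧, M) = 0` whenever `Hom(A, M⟦-n⟧) = 0`. -/
lemma homAshift_zero (n : ℤ) {M : C} (hM : ∀ u : S.A ⟶ M⟦(-n : ℤ)⟧, u = 0)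
    (f : S.A⟦n⟧ ⟶ M) : f = 0 := by
  have e : (S.A⟦n⟧)⟦(-n : ℤ)⟧ ≅ S.A :=
    (shiftFunctorCompIsoId C n (-n) (by ring)).app S.A
  refine shift_cancel (-n) f ?_
  have := hM (e.inv ≫ (shiftFunctor C (-n)).map f)
  calc (shiftFunctor C (-n)).map f
      = e.hom ≫ (e.inv ≫ (shiftFunctor C (-n)).map f) := by simp
  _ = 0 := by rw [this, comp_zero]

lemma projAshift (n : ℤ) {M : C} (hM : S.t.le (-1 - n) M) (f : S.A⟦n⟧ ⟶ M) : f = 0 := by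
  refine homAshift_zero S n (fun u => projA S ?_ u) f
  simpa using le_shift' S.t (-n) hM

lemma orthAshift (n : ℤ) {M : C} {b : ℤ} (hM : S.t.ge b M) (hb : -n < b)
    (f : S.A⟦n⟧ ⟶ M) : f = 0 := by
  have hA' : S.t.le (-n) (S.A⟦n⟧) := by simpa using le_shift' S.t n S.connective
  exact zero_of_lt S.t hA' hM hb f

include serre in
lemma homDAshift_zero (a : ℤ) {P : C} (hP : ∀ u : S.A ⟶ (P⟦(-a : ℤ)⟧), u = 0)
    (f : P ⟶ DA⟦a⟧) : f = 0 := by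
  have e : (DA⟦a⟧)⟦(-a : ℤ)⟧ ≅ DA := (shiftFunctorCompIsoId C a (-a) (by ring)).app DA
  refine shift_cancel (-a) f ?_
  have h0 : (shiftFunctor C (-a)).map f ≫ e.hom = 0 :=
    homDA_zero S DA serre (fun u => hP u) _
  calc (shiftFunctor C (-a)).map f = ((shiftFunctor C (-a)).map f ≫ e.hom) ≫ e.inv := by simp
  _ = 0 := by rw [h0, zero_comp]

end SerreAux


section DApos
set_option linter.unusedSectionVars false

variable (S : DGSetup k C) (DA : C)
  (serre : ∀ M : C, (S.A ⟶ M) ≃ₗ[k] Module.Dual k (M ⟶ DA))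

include serre in
lemma DA_ge : S.t.ge 0 DA := by
  obtain ⟨Z, W, hZ, hW, f, g, hh, hT⟩ := S.t.exists_triangle DA (-1) 0 (by ring)
  have hZzero : IsZero Z := by
    refine S.generates Z (fun n φ => ?_)
    by_cases hn : n ≤ 0
    · exact projAshift S n (le_mono S.t (by omega) hZ) φ
    · -- n ≥ 1
      have h1 : φ ≫ f = 0 := by
        refine homDA_zero S DA serre (fun u => projA S ?_ u) _
        simpa using le_mono S.t (by omega) (le_shift' S.t n S.connective)
      obtain ⟨θ, hθ⟩ := Triangle.coyoneda_exact₂ _ (inv_rot_of_distTriang _ hT) φ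
        (by exact h1)
      have hθ0 : θ = 0 := by
        have hW' : S.t.ge 1 (W⟦(-1 : ℤ)⟧) := by simpa using ge_shift' S.t (-1) hW
        exact orthAshift S n hW' (by omega) θ
      rw [hθ, hθ0, zero_comp]; rfl
  have : IsIso ((Triangle.mk f g hh).mor₂) :=
    (Triangle.isZero₁_iff_isIso₂ _ hT).1 hZzero
  exact ObjectProperty.prop_of_iso (S.t.ge 0) (asIso ((Triangle.mk f g hh).mor₂)).symm hW

include serre in
lemma DA_le (d : ℕ) (hd : 1 ≤ d) (hA : S.t.ge (1 - (d : ℤ)) S.A) :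
    S.t.le ((d : ℤ) - 1) DA := by
  obtain ⟨Z, W, hZ, hW, f, g, hh, hT⟩ := S.t.exists_triangle DA ((d : ℤ) - 1) d (by ring)
  have hWzero : IsZero W := by
    refine S.generates W (fun n φ => ?_)
    by_cases hn : 1 - (d : ℤ) ≤ n
    · exact orthAshift S n hW (by omega) φ
    · -- n ≤ -d
      have h1 : φ ≫ hh = 0 := by
        refine projAshift S n ?_ _
        have := le_shift' S.t 1 hZ
        exact le_mono S.t (by omega) this
      obtain ⟨θ, hθ⟩ := Triangle.coyoneda_exact₃ _ hT φ h1
      have hθ0 : θ = 0 := by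
        refine homDA_zero S DA serre (fun u => ?_) θ
        have hb : S.t.ge (1 - (d : ℤ) - n) (S.A⟦n⟧) := ge_shift' S.t n hA
        exact zero_of_lt S.t S.connective hb (by omega) u
      rw [hθ, hθ0, zero_comp]; rfl
  have : IsIso ((Triangle.mk f g hh).mor₁) :=
    (Triangle.isZero₃_iff_isIso₁ _ hT).1 hWzero
  exact ObjectProperty.prop_of_iso (S.t.le ((d : ℤ) - 1)) (@asIso _ _ _ _ ((Triangle.mk f g hh).mor₁) this) hZ

end DApos


section Approx
set_option linter.unusedSectionVars false

variable (S : DGSetup k C) (DA : C)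
  (serre : ∀ M : C, (S.A ⟶ M) ≃ₗ[k] Module.Dual k (M ⟶ DA))
  (serre_nat : ∀ {M N : C} (g : M ⟶ N) (u : S.A ⟶ M) (w : N ⟶ DA),
      serre M u (g ≫ w) = serre N (u ≫ g) w)

include serre serre_nat in
/-- Left `add (DA⟦s⟧)`-approximation: there is a finite family of maps `X ⟶ DA⟦s⟧`
which jointly detects maps from `A⟦s⟧`. -/
lemma approx (s : ℤ) (X : C) :
    ∃ (m : ℕ) (ι : Fin m → (X ⟶ DA⟦s⟧)),
      ∀ (u : S.A⟦s⟧ ⟶ X), (∀ i, u ≫ ι i = 0) → u = 0 := by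
  haveI := S.homFinite (X⟦(-s : ℤ)⟧) DA
  set X' := X⟦(-s : ℤ)⟧ with hX'
  let w := Module.finBasis k (X' ⟶ DA)
  have hs : (-s) + s = 0 := by ring
  have hs' : s + (-s) = 0 := by ring
  let α : Iso (X'⟦s⟧) X := (shiftFunctorCompIsoId C (-s) s hs).app X
  refine ⟨Module.finrank k (X' ⟶ DA), fun i => α.inv ≫ (shiftFunctor C s).map (w i),
    fun u hu => ?_⟩
  let β : Iso ((S.A⟦s⟧)⟦(-s : ℤ)⟧) S.A := (shiftFunctorCompIsoId C s (-s) hs').app S.A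
  let u' : S.A ⟶ X' := β.inv ≫ (shiftFunctor C (-s)).map u
  have key : ∀ i, u' ≫ w i = 0 := by
    intro i
    have h0 : (shiftFunctor C (-s)).map (u ≫ (α.inv ≫ (shiftFunctor C s).map (w i))) = 0 := by
      rw [hu i, Functor.map_zero]
    rw [Functor.map_comp, Functor.map_comp] at h0
    -- naturality of shiftFunctorCompIsoId C s (-s) at (w i)
    have hnat : (shiftFunctor C (-s)).map ((shiftFunctor C s).map (w i)) =
        (shiftFunctorCompIsoId C s (-s) hs').hom.app X' ≫ (w i) ≫
          (shiftFunctorCompIsoId C s (-s) hs').inv.app DA := by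
      have hn := (shiftFunctorCompIsoId C s (-s) hs').hom.naturality (w i)
      rw [← cancel_mono ((shiftFunctorCompIsoId C s (-s) hs').hom.app DA)]
      simpa using hn
    rw [hnat] at h0
    have hcompat : (shiftFunctor C (-s)).map α.inv ≫
        (shiftFunctorCompIsoId C s (-s) hs').hom.app X' = 𝟙 X' := by
      have h1 : (shiftFunctorCompIsoId C s (-s) hs').hom.app X' =
          (shiftFunctor C (-s)).map α.hom := by
        exact (shift_shiftFunctorCompIsoId_hom_app (-s) s hs X).symm
      rw [h1, ← CategoryTheory.Functor.map_comp, Iso.inv_hom_id, CategoryTheory.Functor.map_id]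
    have h2 : (shiftFunctor C (-s)).map u ≫ w i = 0 := by
      calc (shiftFunctor C (-s)).map u ≫ w i
          = (shiftFunctor C (-s)).map u ≫ ((shiftFunctor C (-s)).map α.inv ≫
              (shiftFunctorCompIsoId C s (-s) hs').hom.app X') ≫ w i := by
            rw [hcompat, id_comp]
        _ = ((shiftFunctor C (-s)).map u ≫ (shiftFunctor C (-s)).map α.inv ≫
              (shiftFunctorCompIsoId C s (-s) hs').hom.app X' ≫ w i ≫
              (shiftFunctorCompIsoId C s (-s) hs').inv.app DA) ≫
              (shiftFunctorCompIsoId C s (-s) hs').hom.app DA := by simp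
        _ = 0 := by rw [h0, zero_comp]
    simp only [u', assoc, h2, comp_zero]
  have hu' : u' = 0 := by
    have hfun : serre X' u' = 0 := by
      refine w.ext (fun i => ?_)
      rw [pairing S DA serre serre_nat u' (w i), key i, map_zero]
      rfl
    exact (serre X').injective (by rw [hfun, map_zero])
  have : (shiftFunctor C (-s)).map u = 0 := by
    have : β.hom ≫ u' = (shiftFunctor C (-s)).map u := by simp [u']
    rw [← this, hu', comp_zero]
  exact shift_cancel (-s) u this

end Approx


section Enough
set_option linter.unusedSectionVars false

variable (S : DGSetup k C) (DA : C)
  (serre : ∀ M : C, (S.A ⟶ M) ≃ₗ[k] Module.Dual k (M ⟶ DA))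
  (serre_nat : ∀ {M N : C} (g : M ⟶ N) (u : S.A ⟶ M) (w : N ⟶ DA),
      serre M u (g ≫ w) = serre N (u ≫ g) w)

include serre serre_nat in
lemma enough (d : ℕ) (hd : 1 ≤ d) (hA : S.A ∈ Hd S.t d)
    (hDAge : S.t.ge 0 DA) (hDAle : S.t.le ((d : ℤ) - 1) DA)
    (X : C) (hX : X ∈ Hd S.t d) :
    ∃ (m : ℕ) (ι : X ⟶ ⨁ (fun _ : Fin m => DA⟦(d : ℤ) - 1⟧)) (Y : C) (_ : Y ∈ Hd S.t d)
      (g : (⨁ (fun _ : Fin m => DA⟦(d : ℤ) - 1⟧)) ⟶ Y) (h : Y ⟶ X⟦(1 : ℤ)⟧),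
      Triangle.mk ι g h ∈ distTriang C := by
  obtain ⟨hX1, hX2⟩ := hX
  obtain ⟨m, ιf, happrox⟩ := approx S DA serre serre_nat ((d : ℤ) - 1) X
  let I := ⨁ (fun _ : Fin m => DA⟦(d : ℤ) - 1⟧)
  let ι : X ⟶ I := biproduct.lift ιf
  obtain ⟨Y, g, h, hT⟩ := distinguished_cocone_triangle ι
  have hIle : S.t.le 0 I :=
    LE_biproduct S.t _ 0 (fun j =>
      le_mono S.t (by omega) (le_shift' S.t ((d : ℤ) - 1) hDAle))
  have hIge : S.t.ge (1 - (d : ℤ)) I :=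
    GE_biproduct S.t _ (1 - (d : ℤ)) (fun j =>
      ge_anti S.t (by omega) (ge_shift' S.t ((d : ℤ) - 1) hDAge))
  -- Y is ≤ 0
  have hYle : S.t.le 0 Y := by
    refine LE_of_orth S.t 0 (fun M hM f => ?_)
    have h2 : g ≫ f = 0 := zero_of_lt S.t hIle hM (by omega) _
    obtain ⟨ψ, hψ⟩ := Triangle.yoneda_exact₃ _ hT f h2
    have hψ0 : ψ = 0 := zero_of_lt S.t (le_shift' S.t 1 hX1) hM (by omega) ψ
    rw [hψ, hψ0, comp_zero]; rfl
  -- maps from A⟦n⟧ to Y vanish for n ≥ d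
  have hYA : ∀ n : ℤ, (d : ℤ) ≤ n → ∀ ψ : S.A⟦n⟧ ⟶ Y, ψ = 0 := by
    intro n hn ψ
    have hψh : ψ ≫ h = 0 := by
      rcases eq_or_lt_of_le hn with heq | hlt
      · subst heq
        set α : S.A⟦(d : ℤ)⟧ ⟶ X⟦(1 : ℤ)⟧ := ψ ≫ h with hα
        have h31 : h ≫ (shiftFunctor C (1 : ℤ)).map ι = 0 :=
          comp_distTriang_mor_zero₃₁ _ hT
        have hαι : α ≫ (shiftFunctor C (1 : ℤ)).map ι = 0 := by
          rw [hα, assoc, h31, comp_zero]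
        let δ : S.A⟦(d : ℤ) - 1⟧ ≅ (S.A⟦(d : ℤ)⟧)⟦(-1 : ℤ)⟧ :=
          (shiftFunctorAdd' C (d : ℤ) (-1) ((d : ℤ) - 1) (by ring)).app S.A
        let ε : (X⟦(1 : ℤ)⟧)⟦(-1 : ℤ)⟧ ≅ X :=
          (shiftFunctorCompIsoId C (1 : ℤ) (-1 : ℤ) (by ring)).app X
        let u : S.A⟦(d : ℤ) - 1⟧ ⟶ X := δ.hom ≫ (shiftFunctor C (-1 : ℤ)).map α ≫ ε.hom
        have hu : ∀ i, u ≫ ιf i = 0 := by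
          intro i
          have hαi : α ≫ (shiftFunctor C (1 : ℤ)).map (ιf i) = 0 := by
            have hlp : (shiftFunctor C (1 : ℤ)).map ι ≫
                (shiftFunctor C (1 : ℤ)).map (biproduct.π _ i) =
                (shiftFunctor C (1 : ℤ)).map (ιf i) := by
              rw [← CategoryTheory.Functor.map_comp, biproduct.lift_π]
            rw [← hlp, ← assoc, hαι, zero_comp]
          have hnat : ε.hom ≫ ιf i =
              (shiftFunctor C (-1 : ℤ)).map ((shiftFunctor C (1 : ℤ)).map (ιf i)) ≫
              (shiftFunctorCompIsoId C (1 : ℤ) (-1 : ℤ) (by ring)).hom.app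
                (DA⟦(d : ℤ) - 1⟧) := by
            have hn' := (shiftFunctorCompIsoId C (1 : ℤ) (-1 : ℤ) (by ring)).hom.naturality
              (ιf i)
            dsimp [ε]
            simpa using hn'.symm
          calc u ≫ ιf i
              = δ.hom ≫ (shiftFunctor C (-1 : ℤ)).map α ≫ (ε.hom ≫ ιf i) := by
                simp [u, assoc]
            _ = δ.hom ≫ (shiftFunctor C (-1 : ℤ)).map
                  (α ≫ (shiftFunctor C (1 : ℤ)).map (ιf i)) ≫
                  (shiftFunctorCompIsoId C (1 : ℤ) (-1 : ℤ) (by ring)).hom.app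
                    (DA⟦(d : ℤ) - 1⟧) := by
                rw [hnat]
                simp [hα]
            _ = 0 := by rw [hαi, Functor.map_zero, zero_comp, comp_zero]
        have hu0 : u = 0 := happrox u hu
        have hmapα : (shiftFunctor C (-1 : ℤ)).map α = 0 := by
          have hrec : (shiftFunctor C (-1 : ℤ)).map α = δ.inv ≫ u ≫ ε.inv := by
            simp [u]
          rw [hrec, hu0, zero_comp, comp_zero]
        exact shift_cancel (-1) α hmapα
      · have hb : S.t.ge ((1 - (d : ℤ)) - 1) (X⟦(1 : ℤ)⟧) := ge_shift' S.t 1 hX2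
        exact orthAshift S n hb (by omega) (ψ ≫ h)
    obtain ⟨χ, hχ⟩ := Triangle.coyoneda_exact₃ _ hT ψ hψh
    have hχ0 : χ = 0 := by
      refine biproduct.hom_ext _ _ (fun j => ?_)
      erw [zero_comp]
      refine homDAshift_zero S DA serre ((d : ℤ) - 1) (fun v => projA S ?_ v) _
      have l2 := le_shift' S.t (-((d : ℤ) - 1)) (le_shift' S.t n S.connective)
      exact le_mono S.t (by omega) l2
    rw [hχ, hχ0, zero_comp]; rfl
  -- Y is ≥ 1 - d
  have hYge : S.t.ge (1 - (d : ℤ)) Y := by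
    obtain ⟨Z, B, hZ, hB, f', g', h', hT'⟩ :=
      S.t.exists_triangle Y (-(d : ℤ)) (1 - (d : ℤ)) (by ring)
    have hZzero : IsZero Z := by
      refine S.generates Z (fun n φ => ?_)
      by_cases hn : n ≤ (d : ℤ) - 1
      · exact projAshift S n (le_mono S.t (by omega) hZ) φ
      · have h1 : φ ≫ f' = 0 := hYA n (by omega) (φ ≫ f')
        obtain ⟨θ, hθ⟩ := Triangle.coyoneda_exact₂ _ (inv_rot_of_distTriang _ hT') φ
          (by exact h1)
        have hθ0 : θ = 0 := by
          have hB' : S.t.ge ((1 - (d : ℤ)) - (-1)) (B⟦(-1 : ℤ)⟧) := ge_shift' S.t (-1) hB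
          exact orthAshift S n hB' (by omega) θ
        rw [hθ, hθ0, zero_comp]; rfl
    have : IsIso ((Triangle.mk f' g' h').mor₂) :=
      (Triangle.isZero₁_iff_isIso₂ _ hT').1 hZzero
    exact ObjectProperty.prop_of_iso (S.t.ge (1 - (d : ℤ)))
      (asIso ((Triangle.mk f' g' h').mor₂)).symm hB
  exact ⟨m, ι, Y, ⟨hYle, hYge⟩, g, h, hT⟩

end Enough

/-- For `A ∈ H^d`, the extended heart `H^d` has enough injectives and
its injective objects are exactly `add(D(A)⟦d-1⟧)`. -/
theorem stmt9 (S : DGSetup k C) (DA : C)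
    (serre : ∀ M : C, (S.A ⟶ M) ≃ₗ[k] Module.Dual k (M ⟶ DA))
    (serre_nat : ∀ {M N : C} (g : M ⟶ N) (u : S.A ⟶ M) (w : N ⟶ DA),
      serre M u (g ≫ w) = serre N (u ≫ g) w)
    (d : ℕ) (hd : 1 ≤ d) (hA : S.A ∈ Hd S.t d) :
    (∀ X ∈ Hd S.t d, ∃ (I : C) (_ : inAdd (DA⟦(d : ℤ) - 1⟧) I) (_ : I ∈ Hd S.t d)
      (ι : X ⟶ I), isInflation (Hd S.t d) ι) ∧
    (∀ I : C, (I ∈ Hd S.t d ∧ injOn (Hd S.t d) I) ↔ inAdd (DA⟦(d : ℤ) - 1⟧) I) := by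
  have hDAge : S.t.ge 0 DA := DA_ge S DA serre
  have hDAle : S.t.le ((d : ℤ) - 1) DA := DA_le S DA serre d hd hA.2
  have hDAHd : DA⟦(d : ℤ) - 1⟧ ∈ Hd S.t d :=
    ⟨le_mono S.t (by omega) (le_shift' S.t ((d : ℤ) - 1) hDAle),
     ge_anti S.t (by omega) (ge_shift' S.t ((d : ℤ) - 1) hDAge)⟩
  have haddHd : ∀ I : C, inAdd (DA⟦(d : ℤ) - 1⟧) I → I ∈ Hd S.t d := by
    rintro I ⟨n, sI, pI, hsp⟩
    exact ⟨LE_of_retract S.t 0 sI pI hsp (LE_biproduct S.t _ 0 (fun j => hDAHd.1)),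
      GE_of_retract S.t _ sI pI hsp (GE_biproduct S.t _ _ (fun j => hDAHd.2))⟩
  have haddInj : ∀ I : C, inAdd (DA⟦(d : ℤ) - 1⟧) I → injOn (Hd S.t d) I := by
    rintro I ⟨n, sI, pI, hsp⟩ X hX f
    have hfs : f ≫ (shiftFunctor C (1 : ℤ)).map sI = 0 := by
      have e : (((⨁ (fun _ : Fin n => DA⟦(d : ℤ) - 1⟧))⟦(1 : ℤ)⟧)⟦(-1 : ℤ)⟧) ≅
          (⨁ (fun _ : Fin n => DA⟦(d : ℤ) - 1⟧)) :=
        (shiftFunctorCompIsoId C (1 : ℤ) (-1 : ℤ) (by ring)).app _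
      have hcomp : ∀ j, ((shiftFunctor C (-1 : ℤ)).map (f ≫ (shiftFunctor C (1 : ℤ)).map sI)
          ≫ e.hom) ≫ biproduct.π _ j = 0 := by
        intro j
        refine homDAshift_zero S DA serre ((d : ℤ) - 1) (fun v => ?_) _
        have hg := ge_shift' S.t (-((d : ℤ) - 1)) (ge_shift' S.t (-1) hX.2)
        exact zero_of_lt S.t S.connective hg (by omega) v
      have h0 : (shiftFunctor C (-1 : ℤ)).map (f ≫ (shiftFunctor C (1 : ℤ)).map sI)
          ≫ e.hom = 0 :=
        biproduct.hom_ext _ _ (fun j => by rw [hcomp j, zero_comp])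
      refine shift_cancel (-1) _ ?_
      calc (shiftFunctor C (-1 : ℤ)).map (f ≫ (shiftFunctor C (1 : ℤ)).map sI)
          = ((shiftFunctor C (-1 : ℤ)).map (f ≫ (shiftFunctor C (1 : ℤ)).map sI) ≫ e.hom)
            ≫ e.inv := by simp
        _ = 0 := by rw [h0, zero_comp]
    calc f = f ≫ (shiftFunctor C (1 : ℤ)).map (sI ≫ pI) := by
          rw [hsp, CategoryTheory.Functor.map_id, comp_id]
      _ = (f ≫ (shiftFunctor C (1 : ℤ)).map sI) ≫ (shiftFunctor C (1 : ℤ)).map pI := by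
          rw [CategoryTheory.Functor.map_comp, assoc]
      _ = 0 := by rw [hfs, zero_comp]
  constructor
  · intro X hX
    obtain ⟨m, ι, Y, hY, g, h, hT⟩ :=
      enough S DA serre serre_nat d hd hA hDAge hDAle X hX
    have hadd : inAdd (DA⟦(d : ℤ) - 1⟧) (⨁ (fun _ : Fin m => DA⟦(d : ℤ) - 1⟧)) :=
      ⟨m, 𝟙 _, 𝟙 _, by simp⟩
    exact ⟨_, hadd, haddHd _ hadd, ι, Y, hY, g, h, hT⟩
  · intro I
    constructor
    · rintro ⟨hI, hinj⟩
      obtain ⟨m, ι, Y, hY, g, h, hT⟩ :=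
        enough S DA serre serre_nat d hd hA hDAge hDAle I hI
      have h0 : h = 0 := hinj Y hY h
      obtain ⟨r, hr⟩ := Triangle.yoneda_exact₂ _
        (inv_rot_of_distTriang _ hT) (𝟙 I) (by change (-h⟦(-1 : ℤ)⟧' ≫ (shiftEquiv C (1 : ℤ)).unitIso.inv.app _) ≫ 𝟙 I = 0; rw [h0]; simp)
      exact ⟨m, ι, r, hr.symm⟩
    · intro hadd
      exact ⟨haddHd _ hadd, haddInj _ hadd⟩

end Paper
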